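/- For every integer k and every integer n ≥ 0, the poly-Cauchy polynomial of the first kind expands in rising factorials as C_n^(k)(x) = Σ_{m=0}^{n} (-1)^m C(n,m) C_{n-m}^{(k)} x^{(m)}, where x^{(m)} = x(x+1)⋯(x+m-1) is the rising factorial. -/

import Mathlib

open PowerSeries Finset

/-- Composition `F(G(t))` of formal power series (intended for `G` with zero
constant term, in which case `coeff n (G ^ m) = 0` for `m > n` and the finite
sum below computes the usual composition). -/
noncomputable def psComp (F G : PowerSeries ℝ) : PowerSeries ℝ :=
  PowerSeries.mk fun n => ∑ m ∈ Finset.range (n + 1),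
    (PowerSeries.coeff m F) * (PowerSeries.coeff n (G ^ m))

/-- The formal power series of `log (1 + t)`. -/
noncomputable def logSeries : PowerSeries ℝ :=
  PowerSeries.mk fun n => if n = 0 then 0 else (-1) ^ (n + 1) / n

/-- The polylogarithm factorial function `Lif_k(t) = ∑_{m ≥ 0} t^m / (m! (m+1)^k)`. -/
noncomputable def Lif (k : ℤ) : PowerSeries ℝ :=
  PowerSeries.mk fun m => 1 / ((m.factorial : ℝ) * ((m : ℝ) + 1) ^ k)

/-- The poly-Cauchy polynomial of the first kind `C_n^{(k)}(x)`, defined by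
`Lif_k(log(1+t)) / (1+t)^x = ∑_{n ≥ 0} C_n^{(k)}(x) t^n / n!`, where
`(1+t)^{-x} = exp (-x · log (1+t))`. -/
noncomputable def polyCauchy (k : ℤ) (n : ℕ) (x : ℝ) : ℝ :=
  (n.factorial : ℝ) * PowerSeries.coeff n
    (psComp (Lif k) logSeries *
      psComp (PowerSeries.rescale (-x) (PowerSeries.exp ℝ)) logSeries)

/-- The (signed) Stirling numbers of the first kind `S₁(l, m)`, defined by
`(log (1+t))^m = m! ∑_{l ≥ m} S₁(l,m) t^l / l!`. -/
noncomputable def S1 (l m : ℕ) : ℝ :=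
  (l.factorial : ℝ) / (m.factorial : ℝ) * PowerSeries.coeff l (logSeries ^ m)

/-- The ordinary Bernoulli numbers, via `t/(e^t - 1) = ∑ B_n t^n/n!`;
here `(mk fun m => 1/(m+1)!)` is the series `(e^t - 1)/t`. -/
noncomputable def Bern (n : ℕ) : ℝ :=
  (n.factorial : ℝ) * PowerSeries.coeff n
    (PowerSeries.mk fun m => (1 : ℝ) / (m + 1).factorial)⁻¹

/-- The Bernoulli polynomial of order `r`, via `(t/(e^t-1))^r e^{xt} = ∑ B_n^{(r)}(x) t^n/n!`. -/
noncomputable def bernPoly (r : ℕ) (n : ℕ) (x : ℝ) : ℝ :=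
  (n.factorial : ℝ) * PowerSeries.coeff n
    (((PowerSeries.mk fun m => (1 : ℝ) / (m + 1).factorial)⁻¹) ^ r *
      PowerSeries.rescale x (PowerSeries.exp ℝ))

/-- The series `log(1+t)/t`, so that `t / log(1+t) = Dlog⁻¹`. -/
noncomputable def Dlog : PowerSeries ℝ :=
  PowerSeries.mk fun n => (-1) ^ n / ((n : ℝ) + 1)

/-- The Cauchy numbers of the first kind, via `t/log(1+t) = ∑ C_n t^n/n!`. -/
noncomputable def cauchyNum (n : ℕ) : ℝ :=
  (n.factorial : ℝ) * PowerSeries.coeff n Dlog⁻¹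

/-- The numbers `T_n^{(r,k)}`, via
`(t/log(1+t))^r · Lif_k(log(1+t)) = ∑ T_n^{(r,k)} t^n/n!`. -/
noncomputable def T (r : ℕ) (k : ℤ) (n : ℕ) : ℝ :=
  (n.factorial : ℝ) * PowerSeries.coeff n (Dlog⁻¹ ^ r * psComp (Lif k) logSeries)

/-- The rising factorial `x^{(m)} = x (x+1) ⋯ (x+m-1)`. -/
noncomputable def risingFactorial (x : ℝ) (m : ℕ) : ℝ :=
  ∏ i ∈ Finset.range m, (x + i)

/-- Carlitz's polynomials `β_n^{(r)}(x)`, via `(t/log(1+t))^r (1+t)^x = ∑ β_n^{(r)}(x) t^n/n!`,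
where `(1+t)^x = exp (x log (1+t))`. -/
noncomputable def carlitz (r : ℕ) (n : ℕ) (x : ℝ) : ℝ :=
  (n.factorial : ℝ) * PowerSeries.coeff n
    (Dlog⁻¹ ^ r * psComp (PowerSeries.rescale x (PowerSeries.exp ℝ)) logSeries)

lemma deriv_log : d⁄dX ℝ logSeries = PowerSeries.mk fun n => (-1)^n := by
  ext n
  have h : ((n:ℝ) + 1) ≠ 0 := by positivity
  simp only [logSeries, coeff_derivative, coeff_mk, Nat.add_eq_zero, one_ne_zero, and_false,
    if_false, pow_succ, Nat.cast_add, Nat.cast_one]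
  field_simp

lemma one_add_X_mul_deriv_log : (1 + X) * d⁄dX ℝ logSeries = 1 := by
  rw [deriv_log]
  ext n
  rcases n with _ | n
  · simp
  · rw [add_mul, one_mul, map_add, coeff_succ_X_mul]
    simp [pow_succ]

lemma key (j : ℕ) : (1 + X) * d⁄dX ℝ (logSeries ^ (j+1)) = C ((j:ℝ)+1) * logSeries ^ j := by
  have h := Derivation.leibniz_pow (PowerSeries.derivative (R := ℝ)) logSeries (j+1)
  rw [h]
  simp only [smul_eq_mul, Nat.add_sub_cancel, nsmul_eq_mul]
  push_cast
  rw [show (1 + X) * (((j:PowerSeries ℝ)+1) * (logSeries ^ j * d⁄dX ℝ logSeries)) =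
    ((j:PowerSeries ℝ)+1) * logSeries ^ j * ((1+X) * d⁄dX ℝ logSeries) by ring,
    one_add_X_mul_deriv_log, mul_one]
  norm_cast

lemma key_coeff (j n : ℕ) :
    ((n:ℝ)+1) * coeff (n+1) (logSeries ^ (j+1)) + n * coeff n (logSeries ^ (j+1))
      = ((j:ℝ)+1) * coeff n (logSeries ^ j) := by
  have h := congrArg (coeff n) (key j)
  rw [coeff_C_mul, add_mul, one_mul, map_add] at h
  rcases n with _ | n
  · rw [coeff_zero_X_mul, add_zero, coeff_derivative] at h
    push_cast
    simpa using h
  · rw [coeff_succ_X_mul, coeff_derivative, coeff_derivative] at h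
    push_cast at h ⊢
    linarith

lemma coeff_log_pow_zero {n m : ℕ} (hn : n < m) : coeff n (logSeries ^ m) = 0 := by
  have hc : constantCoeff logSeries = 0 := by simp [logSeries, ← coeff_zero_eq_constantCoeff]
  have : (X : PowerSeries ℝ)^m ∣ logSeries^m := pow_dvd_pow_of_dvd (X_dvd_iff.mpr hc) m
  exact (X_pow_dvd_iff.mp this) n hn

noncomputable def A (y : ℝ) (m : ℕ) : ℝ :=
  ∑ j ∈ Finset.range (m+1), y^j / (j.factorial : ℝ) * coeff m (logSeries ^ j)

lemma A_zero (y : ℝ) : A y 0 = 1 := by simp [A]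

lemma A_rec (y : ℝ) (m : ℕ) : ((m:ℝ)+1) * A y (m+1) = (y - m) * A y m := by
  have hCm0 : coeff (m+1) ((logSeries : PowerSeries ℝ) ^ 0) = 0 := by
    simp [coeff_one]
  have hS : ∑ j ∈ Finset.range (m+1),
      y^(j+1) / ((j+1).factorial : ℝ) * coeff m (logSeries ^ (j+1))
      = A y m - coeff m (1 : PowerSeries ℝ) := by
    have h2 := Finset.sum_range_succ' (fun j => y^j / (j.factorial : ℝ) * coeff m (logSeries ^ j)) (m+1)
    have h3 : (∑ j ∈ Finset.range (m+2), y^j / (j.factorial : ℝ) * coeff m (logSeries ^ j))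
        = A y m := by
      rw [Finset.sum_range_succ]
      rw [coeff_log_pow_zero (by omega)]
      simp [A]
    rw [h3] at h2
    simp only [pow_zero, Nat.factorial_zero, Nat.cast_one, div_one, one_mul] at h2
    linarith
  calc ((m:ℝ)+1) * A y (m+1)
      = ∑ j ∈ Finset.range (m+2), y^j / (j.factorial : ℝ)
          * (((m:ℝ)+1) * coeff (m+1) (logSeries ^ j)) := by
        rw [A, Finset.mul_sum]; apply Finset.sum_congr rfl; intros; ring
    _ = ∑ j ∈ Finset.range (m+1), y^(j+1) / ((j+1).factorial : ℝ)
          * (((m:ℝ)+1) * coeff (m+1) (logSeries ^ (j+1))) := by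
        rw [Finset.sum_range_succ' (fun j => y^j / (j.factorial : ℝ)
          * (((m:ℝ)+1) * coeff (m+1) (logSeries ^ j))) (m+1)]
        simp [hCm0]
    _ = ∑ j ∈ Finset.range (m+1), (y * (y^j / (j.factorial : ℝ) * coeff m (logSeries ^ j))
          - (m:ℝ) * (y^(j+1) / ((j+1).factorial : ℝ) * coeff m (logSeries ^ (j+1)))) := by
        apply Finset.sum_congr rfl
        intro j _
        have hk := key_coeff j m
        have hfac : (((j+1).factorial : ℕ) : ℝ) = ((j:ℝ)+1) * (j.factorial : ℝ) := by
          rw [Nat.factorial_succ]; push_cast; ring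
        have hne : ((j:ℝ)+1) ≠ 0 := by positivity
        have hne2 : ((j.factorial : ℕ) : ℝ) ≠ 0 := by
          exact_mod_cast Nat.factorial_ne_zero j
        have : ((m:ℝ)+1) * coeff (m+1) (logSeries ^ (j+1))
            = ((j:ℝ)+1) * coeff m (logSeries ^ j) - m * coeff m (logSeries ^ (j+1)) := by
          linarith
        rw [this, hfac]
        field_simp
        ring
    _ = y * A y m - (m:ℝ) * (A y m - coeff m (1 : PowerSeries ℝ)) := by
        rw [Finset.sum_sub_distrib, ← Finset.mul_sum, ← Finset.mul_sum, hS, A]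
    _ = (y - m) * A y m := by
        have h0 : (m:ℝ) * coeff m (1 : PowerSeries ℝ) = 0 := by
          rcases m with _ | m
          · simp
          · simp [coeff_one]
        linear_combination h0

lemma A_formula (y : ℝ) (m : ℕ) :
    (m.factorial : ℝ) * A y m = ∏ i ∈ Finset.range m, (y - i) := by
  induction m with
  | zero => simp [A_zero]
  | succ m ih =>
    rw [Finset.prod_range_succ, ← ih, Nat.factorial_succ]
    push_cast
    linear_combination (m.factorial : ℝ) * A_rec y m

lemma coeff_G (x : ℝ) (m : ℕ) :
    coeff m (psComp (PowerSeries.rescale (-x) (PowerSeries.exp ℝ)) logSeries) = A (-x) m := by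
  unfold psComp A
  rw [coeff_mk]
  refine Finset.sum_congr rfl fun j _ => ?_
  rw [coeff_rescale, coeff_exp]
  simp [map_div₀, div_eq_mul_inv]

lemma mfac_coeff_G (x : ℝ) (m : ℕ) :
    (m.factorial : ℝ) * coeff m (psComp (PowerSeries.rescale (-x) (PowerSeries.exp ℝ)) logSeries)
      = (-1:ℝ)^m * risingFactorial x m := by
  rw [coeff_G, A_formula, risingFactorial]
  calc ∏ i ∈ Finset.range m, (-x - (i:ℝ))
      = ∏ i ∈ Finset.range m, (-1) * (x + i) := by
        refine Finset.prod_congr rfl fun i _ => ?_; ring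
    _ = (-1:ℝ)^m * ∏ i ∈ Finset.range m, (x + (i:ℝ)) := by
        rw [Finset.prod_mul_distrib, Finset.prod_const, Finset.card_range]

lemma psComp_one_log : psComp 1 logSeries = 1 := by
  ext n
  unfold psComp
  rw [coeff_mk, Finset.sum_eq_single 0]
  · simp
  · intro b _ hb
    simp [coeff_one, hb]
  · intro h
    simp at h

lemma polyCauchy_at_zero (k : ℤ) (j : ℕ) :
    polyCauchy k j 0 = (j.factorial : ℝ) * PowerSeries.coeff j (psComp (Lif k) logSeries) := by
  unfold polyCauchy
  rw [neg_zero, PowerSeries.rescale_zero]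
  simp only [RingHom.coe_comp, Function.comp_apply, PowerSeries.constantCoeff_exp, map_one]
  rw [show ((1 : PowerSeries ℝ)) = (1 : PowerSeries ℝ) from rfl, psComp_one_log, mul_one]

/-- Theorem 10 of the paper. -/
theorem polyCauchy_eq_risingFactorial_expansion (k : ℤ) (n : ℕ) (x : ℝ) :
    polyCauchy k n x =
      ∑ m ∈ Finset.range (n + 1),
        (-1 : ℝ) ^ m * (n.choose m : ℝ) * polyCauchy k (n - m) 0 *
          risingFactorial x m := by
  simp only [polyCauchy_at_zero]
  unfold polyCauchy
  rw [mul_comm (psComp (Lif k) logSeries), PowerSeries.coeff_mul,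
    Finset.Nat.sum_antidiagonal_eq_sum_range_succ_mk, Finset.mul_sum]
  refine Finset.sum_congr rfl fun m hm => ?_
  rw [Finset.mem_range] at hm
  have hmn : m ≤ n := by omega
  dsimp only
  have hG := mfac_coeff_G x m
  have hn : ((n.choose m : ℕ) : ℝ) * (m.factorial : ℝ) * ((n-m).factorial : ℝ)
      = (n.factorial : ℝ) := by
    exact_mod_cast congrArg (Nat.cast : ℕ → ℝ)
      (Nat.choose_mul_factorial_mul_factorial hmn)
  rw [← hn]
  set cG := PowerSeries.coeff m (psComp (PowerSeries.rescale (-x) (PowerSeries.exp ℝ)) logSeries)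
  set cF := PowerSeries.coeff (n-m) (psComp (Lif k) logSeries)
  linear_combination ((n.choose m : ℝ) * ((n-m).factorial : ℝ) * cF) * hG
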